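/- Fix α, γ with 0 < αγ < 2, and subspaces H1, H2 of ℝ^n whose orthogonal complements intersect trivially (H1^⊥ ∩ H2^⊥ = {0}). Then the matrix J = I − M, where M = P_{H1^⊥}P_{H2^⊥} + (1 − αγ)P_{H1}P_{H2}, is invertible. -/

import Mathlib

noncomputable def projSub {n : ℕ} (K : Submodule ℝ (EuclideanSpace ℝ (Fin n))) :
    EuclideanSpace ℝ (Fin n) →L[ℝ] EuclideanSpace ℝ (Fin n) :=
  K.subtypeL.comp (K.orthogonalProjection)

lemma projSub_norm_le {n : ℕ} (K : Submodule ℝ (EuclideanSpace ℝ (Fin n)))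
    (x : EuclideanSpace ℝ (Fin n)) : ‖projSub K x‖ ≤ ‖x‖ := by
  have h1 := (K.orthogonalProjectionOnto).le_opNorm x
  have h2 := Submodule.orthogonalProjectionOnto_norm_le K
  calc ‖projSub K x‖ = ‖K.orthogonalProjectionOnto x‖ := rfl
    _ ≤ ‖K.orthogonalProjectionOnto‖ * ‖x‖ := h1
    _ ≤ 1 * ‖x‖ := by nlinarith [norm_nonneg x]
    _ = ‖x‖ := one_mul _

lemma projSub_mem {n : ℕ} (K : Submodule ℝ (EuclideanSpace ℝ (Fin n)))
    (x : EuclideanSpace ℝ (Fin n)) : projSub K x ∈ K := (K.orthogonalProjection x).2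

lemma projSub_of_mem {n : ℕ} {K : Submodule ℝ (EuclideanSpace ℝ (Fin n))}
    {x : EuclideanSpace ℝ (Fin n)} (hx : x ∈ K) : projSub K x = x := by
  simp only [projSub, ContinuousLinearMap.comp_apply, Submodule.subtypeL_apply]
  exact Submodule.starProjection_eq_self_iff.2 hx

lemma projSub_of_mem_orth {n : ℕ} {K : Submodule ℝ (EuclideanSpace ℝ (Fin n))}
    {x : EuclideanSpace ℝ (Fin n)} (hx : x ∈ Kᗮ) : projSub K x = 0 := by
  simp only [projSub, ContinuousLinearMap.comp_apply, Submodule.subtypeL_apply]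
  rw [show K.orthogonalProjection x = 0 from Submodule.orthogonalProjectionOnto_apply_of_mem_orthogonal hx]
  rfl

lemma projSub_eq_self_iff {n : ℕ} {K : Submodule ℝ (EuclideanSpace ℝ (Fin n))}
    {x : EuclideanSpace ℝ (Fin n)} : projSub K x = x ↔ x ∈ K := by
  constructor
  · intro hx; rw [← hx]; exact projSub_mem K x
  · exact projSub_of_mem

lemma projSub_pyth {n : ℕ} (K : Submodule ℝ (EuclideanSpace ℝ (Fin n)))
    (x : EuclideanSpace ℝ (Fin n)) :
    ‖x‖ ^ 2 = ‖projSub K x‖ ^ 2 + ‖projSub Kᗮ x‖ ^ 2 := by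
  simpa [projSub] using Submodule.norm_sq_eq_add_norm_sq_projection x K

/-- If `0 < αγ < 2` and `H1^⊥ ∩ H2^⊥ = {0}`, the matrix `J = I − M` with
`M = P_{H1^⊥}P_{H2^⊥} + (1 − αγ)P_{H1}P_{H2}` is invertible. -/
theorem stmt19 {n : ℕ} (H1 H2 : Submodule ℝ (EuclideanSpace ℝ (Fin n)))
    (h : H1ᗮ ⊓ H2ᗮ = ⊥) (α γ : ℝ) (h1 : 0 < α * γ) (h2 : α * γ < 2)
    (M : EuclideanSpace ℝ (Fin n) →L[ℝ] EuclideanSpace ℝ (Fin n))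
    (hM : M = (projSub H1ᗮ).comp (projSub H2ᗮ) + (1 - α * γ) • (projSub H1).comp (projSub H2)) :
    IsUnit ((1 : EuclideanSpace ℝ (Fin n) →L[ℝ] EuclideanSpace ℝ (Fin n)) - M) := by
  set c : ℝ := 1 - α * γ with hc
  have hc2 : c ^ 2 < 1 := by nlinarith
  rw [ContinuousLinearMap.isUnit_iff_bijective]
  have hinj : Function.Injective ((1 : EuclideanSpace ℝ (Fin n) →L[ℝ] EuclideanSpace ℝ (Fin n)) - M) := by
    rw [injective_iff_map_eq_zero]
    intro x hx
    simp only [LinearMap.mem_ker, ContinuousLinearMap.coe_sub', Pi.sub_apply,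
      ContinuousLinearMap.one_apply, sub_eq_zero] at hx
    rw [hM] at hx
    simp only [ContinuousLinearMap.add_apply, ContinuousLinearMap.comp_apply,
      ContinuousLinearMap.smul_apply] at hx
    have hu : (projSub H1ᗮ) (projSub H2ᗮ x) ∈ H1ᗮ := projSub_mem _ _
    have hv : (projSub H1) (projSub H2 x) ∈ H1 := projSub_mem _ _
    have hv' : (projSub H1) (projSub H2 x) ∈ H1ᗮᗮ := H1.le_orthogonal_orthogonal hv
    have hπ1 : (projSub H1) x = c • (projSub H1) (projSub H2 x) := by
      conv_lhs => rw [hx]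
      rw [map_add, map_smul, projSub_of_mem_orth hu, projSub_of_mem hv, zero_add]
    have hπ1o : (projSub H1ᗮ) x = (projSub H1ᗮ) (projSub H2ᗮ x) := by
      conv_lhs => rw [hx]
      rw [map_add, map_smul, projSub_of_mem hu, projSub_of_mem_orth hv', smul_zero, add_zero]
    have pyth1 := projSub_pyth H1 x
    have pyth2 := projSub_pyth H2 x
    have n1 : ‖(projSub H1) (projSub H2 x)‖ ≤ ‖(projSub H2) x‖ := projSub_norm_le _ _
    have n2 : ‖(projSub H1ᗮ) (projSub H2ᗮ x)‖ ≤ ‖(projSub H2ᗮ) x‖ := projSub_norm_le _ _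
    have e1 : ‖(projSub H1) x‖ = |c| * ‖(projSub H1) (projSub H2 x)‖ := by
      rw [hπ1, norm_smul, Real.norm_eq_abs]
    have habs : |c| * |c| = c ^ 2 := by rw [← abs_mul, sq, abs_mul_self]
    have A : ‖(projSub H1) x‖ ^ 2 ≤ c ^ 2 * ‖(projSub H2) x‖ ^ 2 := by
      rw [e1, mul_pow, sq_abs]
      exact mul_le_mul_of_nonneg_left (pow_le_pow_left₀ (norm_nonneg _) n1 2) (sq_nonneg c)
    have B : ‖(projSub H1ᗮ) x‖ ^ 2 ≤ ‖(projSub H2ᗮ) x‖ ^ 2 := by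
      rw [hπ1o]
      nlinarith [norm_nonneg ((projSub H1ᗮ) (projSub H2ᗮ x)), norm_nonneg ((projSub H2ᗮ) x)]
    have hP2 : (projSub H2) x = 0 := by
      by_contra hne
      have hpos : 0 < ‖(projSub H2) x‖ := norm_pos_iff.2 hne
      have hsq : 0 < ‖(projSub H2) x‖ ^ 2 := pow_pos hpos 2
      nlinarith [hsq, hc2]
    have hx2 : x ∈ H2ᗮ := by
      have hz : projSub H2ᗮ x = x := by
        have := projSub_pyth H2 x
        rw [hP2] at this
        -- ‖x‖² = 0 + ‖projSub H2ᗮ x‖²  ... instead use decomposition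
        have hdec : projSub H2 x + projSub H2ᗮ x = x := by
          exact Submodule.starProjection_add_starProjection_orthogonal x
        rw [hP2, zero_add] at hdec
        exact hdec
      exact projSub_eq_self_iff.1 hz
    have hx1 : x ∈ H1ᗮ := by
      have hz : projSub H1ᗮ x = x := by
        conv_rhs => rw [hx]
        rw [hP2, map_zero, smul_zero, add_zero, projSub_of_mem hx2]
      exact projSub_eq_self_iff.1 hz
    have : x ∈ H1ᗮ ⊓ H2ᗮ := ⟨hx1, hx2⟩
    rw [h] at this
    simpa using this
  exact ⟨hinj, LinearMap.injective_iff_surjective.1 hinj⟩
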